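/- Let φ̃_k(x) = T_k(x) − (2(k+2)/(k+3)) T_{k+2}(x) + ((k+1)/(k+3)) T_{k+4}(x). For all j, k ∈ ℕ the entries B̃_{kj} = ⟨φ̃_j, φ̃_k⟩_σ satisfy: B̃_{kk} = (π/2)(c_k + 4((k+2)/(k+3))² + ((k+1)/(k+3))²); B̃_{k,k+2} = B̃_{k+2,k} = −π((k+2)/(k+3) + (k+4)(k+1)/((k+5)(k+3))); B̃_{k,k+4} = B̃_{k+4,k} = (π/2)(k+1)/(k+3); and B̃_{kj} = 0 whenever |j − k| ∉ {0, 2, 4}. In particular the mass matrix of Shen's biharmonic basis has only five nonzero diagonals. -/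

import Mathlib

open Real Polynomial

/-- The k-th Chebyshev polynomial of the first kind, as a real polynomial. -/
noncomputable def chebT (n : ℕ) : Polynomial ℝ := Polynomial.Chebyshev.T ℝ (n : ℤ)

/-- The Chebyshev-weighted inner product `⟨f,g⟩_σ = ∫_{-1}^{1} f g (1-x²)^{-1/2} dx`. -/
noncomputable def chebInner (f g : Polynomial ℝ) : ℝ :=
  ∫ x in (-1:ℝ)..1, f.eval x * g.eval x / Real.sqrt (1 - x ^ 2)

/-- Shen's biharmonic basis function
`φ̃_k = T_k − (2(k+2)/(k+3)) T_{k+2} + ((k+1)/(k+3)) T_{k+4}`. -/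
noncomputable def shenB (k : ℕ) : Polynomial ℝ :=
  chebT k - Polynomial.C ((2 * ((k : ℝ) + 2)) / ((k : ℝ) + 3)) * chebT (k + 2)
    + Polynomial.C (((k : ℝ) + 1) / ((k : ℝ) + 3)) * chebT (k + 4)

/-- `c_0 = 2`, `c_k = 1` for `k ≥ 1`. -/
noncomputable def cCoef (k : ℕ) : ℝ := if k = 0 then 2 else 1

open MeasureTheory intervalIntegral Set

/-- `1/√(1-x²)` is interval integrable on `[-1,1]`. -/
lemma integrable_one_div_sqrt :
    IntervalIntegrable (fun x : ℝ => 1 / Real.sqrt (1 - x ^ 2)) volume (-1) 1 := by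
  apply intervalIntegrable_deriv_of_nonneg (g := Real.arcsin)
  · exact Real.continuous_arcsin.continuousOn
  · intro x hx
    simp only [min_eq_left, max_eq_right, (by norm_num : (-1:ℝ) ≤ 1)] at hx
    exact Real.hasDerivAt_arcsin (ne_of_gt hx.1) (ne_of_lt hx.2)
  · intro x _
    positivity

/-- Any polynomial divided by `√(1-x²)` is interval integrable on `[-1,1]`. -/
lemma integrable_poly_div_sqrt (p : Polynomial ℝ) :
    IntervalIntegrable (fun x : ℝ => p.eval x / Real.sqrt (1 - x ^ 2)) volume (-1) 1 := by
  obtain ⟨C, hC⟩ := (isCompact_Icc (a := (-1:ℝ)) (b := 1)).exists_bound_of_continuousOn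
    (p.continuous.continuousOn)
  have hC0 : 0 ≤ C := le_trans (norm_nonneg _) (hC 0 (by norm_num))
  have hint : IntervalIntegrable (fun x : ℝ => C * (1 / Real.sqrt (1 - x ^ 2))) volume (-1) 1 :=
    integrable_one_div_sqrt.const_mul C
  apply hint.mono_fun
  · exact ((p.continuous.measurable).div
      ((Real.continuous_sqrt.comp (by continuity : Continuous fun x : ℝ => 1 - x ^ 2)).measurable)).aestronglyMeasurable
  · filter_upwards [MeasureTheory.ae_restrict_mem measurableSet_uIoc] with x hx
    have hx' : x ∈ Set.Icc (-1:ℝ) 1 := by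
      rcases Set.mem_uIoc.1 hx with h | h
      · exact ⟨le_of_lt h.1, h.2⟩
      · constructor <;> nlinarith [h.1, h.2]
    have hb := hC x hx'
    have hs : 0 ≤ Real.sqrt (1 - x ^ 2) := Real.sqrt_nonneg _
    simp only [Real.norm_eq_abs, abs_div]
    rcases eq_or_lt_of_le hs with h0 | h0
    · rw [← h0]; simp
    · rw [abs_of_pos h0, abs_mul, abs_of_nonneg hC0, abs_div, abs_one, abs_of_pos h0,
        mul_one_div]
      gcongr
      simpa [Real.norm_eq_abs] using hb


/-- Substitution `x = cos θ`. -/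
lemma cheb_subst (p : Polynomial ℝ) :
    (∫ x in (-1:ℝ)..1, p.eval x / Real.sqrt (1 - x ^ 2))
      = ∫ θ in (0:ℝ)..π, p.eval (Real.cos θ) := by
  set H : ℝ → ℝ := fun θ => ∫ t in (0:ℝ)..θ, p.eval (Real.cos t) with hH
  have hc : Continuous fun t : ℝ => p.eval (Real.cos t) := p.continuous.comp Real.continuous_cos
  have Hderiv : ∀ θ : ℝ, HasDerivAt H (p.eval (Real.cos θ)) θ := by
    intro θ
    exact intervalIntegral.integral_hasDerivAt_right (hc.intervalIntegrable _ _)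
      (hc.stronglyMeasurableAtFilter _ _) hc.continuousAt
  have Hcont : Continuous H := by
    rw [continuous_iff_continuousAt]; exact fun θ => (Hderiv θ).continuousAt
  set G : ℝ → ℝ := fun x => -H (Real.arccos x) with hG
  have key : (∫ x in (-1:ℝ)..1, p.eval x / Real.sqrt (1 - x ^ 2)) = G 1 - G (-1) := by
    apply intervalIntegral.integral_eq_sub_of_hasDerivAt_of_le (by norm_num)
    · exact (Hcont.comp Real.continuous_arccos).neg.continuousOn
    · intro x hx
      have h1 : x ≠ -1 := ne_of_gt hx.1
      have h2 : x ≠ 1 := ne_of_lt hx.2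
      have := (((Hderiv (Real.arccos x)).comp x (Real.hasDerivAt_arccos h1 h2)).neg)
      convert this using 1
      · rfl
      rw [Real.cos_arccos (le_of_lt hx.1) (le_of_lt hx.2)]
      ring
    · exact integrable_poly_div_sqrt p
  rw [key]
  simp only [hG, Real.arccos_one, Real.arccos_neg_one, hH]
  rw [intervalIntegral.integral_same]
  ring

/-- `∫_0^π cos(jθ) dθ`. -/
lemma integral_cos_int (j : ℤ) :
    (∫ θ in (0:ℝ)..π, Real.cos (j * θ)) = if j = 0 then π else 0 := by
  by_cases hj : j = 0
  · simp [hj, Real.pi_pos.le]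
  · have hj' : (j : ℝ) ≠ 0 := Int.cast_ne_zero.2 hj
    simp only [hj, if_false]
    set F : ℝ → ℝ := fun θ => Real.sin (j * θ) / j with hF
    have : (∫ θ in (0:ℝ)..π, Real.cos (j * θ)) = F π - F 0 := by
      apply intervalIntegral.integral_eq_sub_of_hasDerivAt
      · intro θ _
        have h1 : HasDerivAt (fun θ : ℝ => (j : ℝ) * θ) (j : ℝ) θ := by
          simpa using (hasDerivAt_id θ).const_mul (j : ℝ)
        have := ((Real.hasDerivAt_sin ((j : ℝ) * θ)).comp θ h1).div_const (j : ℝ)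
        convert this using 1
        · rfl
        · rfl
        field_simp
      · exact ((Real.continuous_cos.comp (continuous_const.mul continuous_id)).intervalIntegrable _ _)
    rw [this]
    simp [hF, Real.sin_int_mul_pi]

/-- Orthogonality of Chebyshev polynomials. -/
lemma chebInner_TT (m n : ℕ) :
    chebInner (chebT m) (chebT n)
      = if m = n then (if m = 0 then π else π / 2) else 0 := by
  have h1 : chebInner (chebT m) (chebT n)
      = ∫ x in (-1:ℝ)..1, (chebT m * chebT n).eval x / Real.sqrt (1 - x ^ 2) := by
    simp [chebInner]
  rw [h1, cheb_subst]
  have h2 : ∀ θ : ℝ, (chebT m * chebT n).eval (Real.cos θ)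
      = (Real.cos ((((m : ℤ) - (n : ℤ) : ℤ) : ℝ) * θ)
          + Real.cos ((((m : ℤ) + (n : ℤ) : ℤ) : ℝ) * θ)) / 2 := by
    intro θ
    rw [Polynomial.eval_mul]
    show (Polynomial.Chebyshev.T ℝ (m : ℤ)).eval (Real.cos θ)
        * (Polynomial.Chebyshev.T ℝ (n : ℤ)).eval (Real.cos θ) = _
    rw [Polynomial.Chebyshev.T_real_cos, Polynomial.Chebyshev.T_real_cos]
    push_cast
    rw [show ((m : ℝ) - n) * θ = (m : ℝ) * θ - (n : ℝ) * θ by ring,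
      show ((m : ℝ) + n) * θ = (m : ℝ) * θ + (n : ℝ) * θ by ring,
      Real.cos_sub, Real.cos_add]
    ring
  rw [intervalIntegral.integral_congr (g := fun θ =>
      (Real.cos ((((m : ℤ) - (n : ℤ) : ℤ) : ℝ) * θ)
        + Real.cos ((((m : ℤ) + (n : ℤ) : ℤ) : ℝ) * θ)) / 2)
      (fun θ _ => h2 θ)]
  have ic : ∀ c : ℤ, IntervalIntegrable (fun θ : ℝ => Real.cos ((c : ℝ) * θ)) volume 0 π :=
    fun c => (Real.continuous_cos.comp (continuous_const.mul continuous_id)).intervalIntegrable _ _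
  rw [intervalIntegral.integral_div,
    intervalIntegral.integral_add (ic ((m : ℤ) - (n : ℤ))) (ic ((m : ℤ) + (n : ℤ))),
    integral_cos_int ((m : ℤ) - (n : ℤ)), integral_cos_int ((m : ℤ) + (n : ℤ))]
  by_cases hmn : m = n
  · subst hmn
    by_cases hm : m = 0 <;> simp [hm]
  · have h3 : (m : ℤ) - n ≠ 0 := by omega
    have h4 : (m : ℤ) + n ≠ 0 := by omega
    simp [hmn, h3, h4]


noncomputable def Jp (p : Polynomial ℝ) : ℝ :=
  ∫ x in (-1:ℝ)..1, p.eval x / Real.sqrt (1 - x ^ 2)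

lemma Jp_add (p q : Polynomial ℝ) : Jp (p + q) = Jp p + Jp q := by
  unfold Jp
  rw [← intervalIntegral.integral_add (integrable_poly_div_sqrt p) (integrable_poly_div_sqrt q)]
  apply intervalIntegral.integral_congr
  intro x _
  simp [add_div]

lemma Jp_smul (a : ℝ) (p : Polynomial ℝ) : Jp (Polynomial.C a * p) = a * Jp p := by
  unfold Jp
  rw [← intervalIntegral.integral_const_mul]
  apply intervalIntegral.integral_congr
  intro x _
  simp [mul_div_assoc]

lemma JpTT (m n : ℕ) : Jp (chebT m * chebT n) = chebInner (chebT m) (chebT n) := by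
  simp [Jp, chebInner]

lemma chebInner_eq_Jp (f g : Polynomial ℝ) : chebInner f g = Jp (f * g) := by
  simp [Jp, chebInner]

lemma shen_inner (j k : ℕ) : chebInner (shenB j) (shenB k) =
    chebInner (chebT j) (chebT k)
    + (-((2 * ((k : ℝ) + 2)) / ((k : ℝ) + 3))) * chebInner (chebT j) (chebT (k + 2))
    + (((k : ℝ) + 1) / ((k : ℝ) + 3)) * chebInner (chebT j) (chebT (k + 4))
    + (-((2 * ((j : ℝ) + 2)) / ((j : ℝ) + 3))) * chebInner (chebT (j + 2)) (chebT k)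
    + ((2 * ((j : ℝ) + 2)) / ((j : ℝ) + 3)) * (((2 * ((k : ℝ) + 2)) / ((k : ℝ) + 3)) * chebInner (chebT (j + 2)) (chebT (k + 2)))
    + (-((2 * ((j : ℝ) + 2)) / ((j : ℝ) + 3))) * ((((k : ℝ) + 1) / ((k : ℝ) + 3)) * chebInner (chebT (j + 2)) (chebT (k + 4)))
    + (((j : ℝ) + 1) / ((j : ℝ) + 3)) * chebInner (chebT (j + 4)) (chebT k)
    + (-(((j : ℝ) + 1) / ((j : ℝ) + 3))) * (((2 * ((k : ℝ) + 2)) / ((k : ℝ) + 3)) * chebInner (chebT (j + 4)) (chebT (k + 2)))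
    + (((j : ℝ) + 1) / ((j : ℝ) + 3)) * ((((k : ℝ) + 1) / ((k : ℝ) + 3)) * chebInner (chebT (j + 4)) (chebT (k + 4))) := by
  have hmul : shenB j * shenB k =
      chebT j * chebT k
      + Polynomial.C (-((2 * ((k : ℝ) + 2)) / ((k : ℝ) + 3))) * (chebT j * chebT (k + 2))
      + Polynomial.C (((k : ℝ) + 1) / ((k : ℝ) + 3)) * (chebT j * chebT (k + 4))
      + Polynomial.C (-((2 * ((j : ℝ) + 2)) / ((j : ℝ) + 3))) * (chebT (j + 2) * chebT k)
      + Polynomial.C ((2 * ((j : ℝ) + 2)) / ((j : ℝ) + 3)) * (Polynomial.C ((2 * ((k : ℝ) + 2)) / ((k : ℝ) + 3)) * (chebT (j + 2) * chebT (k + 2)))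
      + Polynomial.C (-((2 * ((j : ℝ) + 2)) / ((j : ℝ) + 3))) * (Polynomial.C (((k : ℝ) + 1) / ((k : ℝ) + 3)) * (chebT (j + 2) * chebT (k + 4)))
      + Polynomial.C (((j : ℝ) + 1) / ((j : ℝ) + 3)) * (chebT (j + 4) * chebT k)
      + Polynomial.C (-(((j : ℝ) + 1) / ((j : ℝ) + 3))) * (Polynomial.C ((2 * ((k : ℝ) + 2)) / ((k : ℝ) + 3)) * (chebT (j + 4) * chebT (k + 2)))
      + Polynomial.C (((j : ℝ) + 1) / ((j : ℝ) + 3)) * (Polynomial.C (((k : ℝ) + 1) / ((k : ℝ) + 3)) * (chebT (j + 4) * chebT (k + 4))) := by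
    simp only [shenB, map_neg]
    ring
  rw [chebInner_eq_Jp, hmul]
  simp only [Jp_add, Jp_smul, JpTT]

lemma I_ne (m n : ℕ) (h : m ≠ n) : chebInner (chebT m) (chebT n) = 0 := by
  rw [chebInner_TT, if_neg h]

lemma I_diag (m : ℕ) (h : m ≠ 0) : chebInner (chebT m) (chebT m) = π / 2 := by
  rw [chebInner_TT, if_pos rfl, if_neg h]

lemma I_zero : chebInner (chebT 0) (chebT 0) = π := by
  rw [chebInner_TT]; simp

lemma chebInner_symm (f g : Polynomial ℝ) : chebInner f g = chebInner g f := by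
  unfold chebInner
  apply intervalIntegral.integral_congr
  intro x _
  simp only []
  rw [mul_comm]

/-- The mass matrix `B̃_{kj} = ⟨φ̃_j, φ̃_k⟩_σ` of Shen's biharmonic basis has
only five nonzero diagonals, with the stated entries. -/
theorem shen_biharmonic_mass_matrix :
    (∀ k : ℕ, chebInner (shenB k) (shenB k) =
      Real.pi / 2 * (cCoef k + 4 * (((k : ℝ) + 2) / ((k : ℝ) + 3)) ^ 2
        + (((k : ℝ) + 1) / ((k : ℝ) + 3)) ^ 2)) ∧
    (∀ k : ℕ, chebInner (shenB (k + 2)) (shenB k) =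
      -Real.pi * (((k : ℝ) + 2) / ((k : ℝ) + 3)
        + ((k : ℝ) + 4) * ((k : ℝ) + 1) / (((k : ℝ) + 5) * ((k : ℝ) + 3)))) ∧
    (∀ k : ℕ, chebInner (shenB k) (shenB (k + 2)) =
      -Real.pi * (((k : ℝ) + 2) / ((k : ℝ) + 3)
        + ((k : ℝ) + 4) * ((k : ℝ) + 1) / (((k : ℝ) + 5) * ((k : ℝ) + 3)))) ∧
    (∀ k : ℕ, chebInner (shenB (k + 4)) (shenB k) =
      Real.pi / 2 * (((k : ℝ) + 1) / ((k : ℝ) + 3))) ∧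
    (∀ k : ℕ, chebInner (shenB k) (shenB (k + 4)) =
      Real.pi / 2 * (((k : ℝ) + 1) / ((k : ℝ) + 3))) ∧
    (∀ j k : ℕ, j ≠ k → j ≠ k + 2 → k ≠ j + 2 → j ≠ k + 4 → k ≠ j + 4 →
      chebInner (shenB j) (shenB k) = 0) := by
  have diag : ∀ k : ℕ, chebInner (shenB k) (shenB k) =
      Real.pi / 2 * (cCoef k + 4 * (((k : ℝ) + 2) / ((k : ℝ) + 3)) ^ 2
        + (((k : ℝ) + 1) / ((k : ℝ) + 3)) ^ 2) := by
    intro k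
    have h3 : ((k : ℝ) + 3) ≠ 0 := by positivity
    rw [shen_inner, I_ne k (k + 2) (by omega), I_ne k (k + 4) (by omega),
      I_ne (k + 2) k (by omega), I_ne (k + 2) (k + 4) (by omega),
      I_ne (k + 4) k (by omega), I_ne (k + 4) (k + 2) (by omega),
      I_diag (k + 2) (by omega), I_diag (k + 4) (by omega)]
    by_cases hk : k = 0
    · subst hk
      rw [I_zero]
      simp only [cCoef, if_pos rfl]
      norm_num
      ring
    · rw [I_diag k hk]
      simp only [cCoef, if_neg hk]
      field_simp
      ring
  have off2 : ∀ k : ℕ, chebInner (shenB (k + 2)) (shenB k) =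
      -Real.pi * (((k : ℝ) + 2) / ((k : ℝ) + 3)
        + ((k : ℝ) + 4) * ((k : ℝ) + 1) / (((k : ℝ) + 5) * ((k : ℝ) + 3))) := by
    intro k
    have h3 : ((k : ℝ) + 3) ≠ 0 := by positivity
    have h5 : ((k : ℝ) + 5) ≠ 0 := by positivity
    rw [shen_inner, I_ne (k + 2) k (by omega), I_ne (k + 2) (k + 4) (by omega),
      I_ne (k + 2 + 2) k (by omega), I_ne (k + 2 + 2) (k + 2) (by omega),
      I_ne (k + 2 + 4) k (by omega), I_ne (k + 2 + 4) (k + 2) (by omega),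
      I_ne (k + 2 + 4) (k + 4) (by omega),
      I_diag (k + 2) (by omega), show k + 2 + 2 = k + 4 from rfl, I_diag (k + 4) (by omega)]
    push_cast
    field_simp
    ring
  have off4 : ∀ k : ℕ, chebInner (shenB (k + 4)) (shenB k) =
      Real.pi / 2 * (((k : ℝ) + 1) / ((k : ℝ) + 3)) := by
    intro k
    have h3 : ((k : ℝ) + 3) ≠ 0 := by positivity
    rw [shen_inner, I_ne (k + 4) k (by omega), I_ne (k + 4) (k + 2) (by omega),
      I_ne (k + 4 + 2) k (by omega), I_ne (k + 4 + 2) (k + 2) (by omega),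
      I_ne (k + 4 + 2) (k + 4) (by omega), I_ne (k + 4 + 4) k (by omega),
      I_ne (k + 4 + 4) (k + 2) (by omega), I_ne (k + 4 + 4) (k + 4) (by omega),
      I_diag (k + 4) (by omega)]
    push_cast
    field_simp
    ring
  have zero : ∀ j k : ℕ, j ≠ k → j ≠ k + 2 → k ≠ j + 2 → j ≠ k + 4 → k ≠ j + 4 →
      chebInner (shenB j) (shenB k) = 0 := by
    intro j k h1 h2 h3 h4 h5
    rw [shen_inner, I_ne j k (by omega), I_ne j (k + 2) (by omega), I_ne j (k + 4) (by omega),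
      I_ne (j + 2) k (by omega), I_ne (j + 2) (k + 2) (by omega),
      I_ne (j + 2) (k + 4) (by omega), I_ne (j + 4) k (by omega),
      I_ne (j + 4) (k + 2) (by omega), I_ne (j + 4) (k + 4) (by omega)]
    ring
  exact ⟨diag, off2, fun k => (chebInner_symm _ _).trans (off2 k),
    off4, fun k => (chebInner_symm _ _).trans (off4 k), zero⟩
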